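/- arXiv:1308.6718 — 4 statements merged into one kernel-verified Lean document; each statement's English description precedes it below -/
import Mathlib

section
/- Let x, w be real numbers and y a complex number. The 2×2 Hermitian matrix W = [[x, conj(y)], [y, w]] is positive semidefinite if and only if sqrt((x - w)^2 + (2·Re y)^2 + (2·Im y)^2) ≤ x + w. (This shows that a 2×2 Hermitian positive semidefiniteness constraint is representable as a second-order cone constraint in R^3.) -/
open ComplexOrder

/-- A 2×2 Hermitian matrix `[[x, conj y], [y, w]]` (with `x, w` real, `y` complex)
is positive semidefinite iff `sqrt((x-w)² + (2 Re y)² + (2 Im y)²) ≤ x + w`,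
i.e. the PSD constraint is a second-order cone constraint in ℝ³. -/
theorem stmt_0 (x w : ℝ) (y : ℂ) :
    (Matrix.PosSemidef !![(x : ℂ), (starRingEnd ℂ) y; y, (w : ℂ)]) ↔
      Real.sqrt ((x - w) ^ 2 + (2 * y.re) ^ 2 + (2 * y.im) ^ 2) ≤ x + w := by
  constructor
  · intro hP
    obtain ⟨-, hq⟩ := Matrix.posSemidef_iff_dotProduct_mulVec.mp hP
    have key : ∀ v : Fin 2 → ℂ,
        0 ≤ x * ((v 0).re ^ 2 + (v 0).im ^ 2) + w * ((v 1).re ^ 2 + (v 1).im ^ 2)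
          + 2 * (y.re * ((v 0).re * (v 1).re + (v 0).im * (v 1).im)
                 + y.im * ((v 0).re * (v 1).im - (v 0).im * (v 1).re)) := by
      intro v
      have h := hq v
      rw [Complex.le_def] at h
      have h1 := h.1
      simp [dotProduct, Matrix.mulVec, Fin.sum_univ_two, Complex.ext_iff,
        Complex.add_re, Complex.mul_re, Complex.mul_im] at h1
      nlinarith [h1]
    have hx : 0 ≤ x := by have := key ![1, 0]; simp at this; linarith
    have hw : 0 ≤ w := by have := key ![0, 1]; simp at this; linarith
    have h3 := key ![(w : ℂ), -y]
    have h4 := key ![(starRingEnd ℂ) y, -(x:ℂ)]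
    have h5 := key ![(starRingEnd ℂ) y, -1]
    simp [Complex.ext_iff] at h3 h4 h5
    have hn : y.re ^ 2 + y.im ^ 2 ≤ x * w := by
      rcases lt_or_eq_of_le hx with hx' | hx'
      · nlinarith
      · rcases lt_or_eq_of_le hw with hw' | hw'
        · nlinarith
        · nlinarith
    have hA : (x - w) ^ 2 + (2 * y.re) ^ 2 + (2 * y.im) ^ 2 ≤ (x + w) ^ 2 := by nlinarith
    calc Real.sqrt ((x - w) ^ 2 + (2 * y.re) ^ 2 + (2 * y.im) ^ 2)
        ≤ Real.sqrt ((x + w) ^ 2) := Real.sqrt_le_sqrt hA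
      _ = x + w := Real.sqrt_sq (by linarith)
  · intro h
    have hpos : 0 ≤ x + w := le_trans (Real.sqrt_nonneg _) h
    have hA : (x - w) ^ 2 + (2 * y.re) ^ 2 + (2 * y.im) ^ 2 ≤ (x + w) ^ 2 := by
      have h0 : 0 ≤ (x - w) ^ 2 + (2 * y.re) ^ 2 + (2 * y.im) ^ 2 := by positivity
      nlinarith [Real.sq_sqrt h0, Real.sqrt_nonneg ((x - w) ^ 2 + (2 * y.re) ^ 2 + (2 * y.im) ^ 2)]
    have hn : y.re ^ 2 + y.im ^ 2 ≤ x * w := by nlinarith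
    have hx : 0 ≤ x := by nlinarith [sq_nonneg y.re, sq_nonneg y.im]
    have hw : 0 ≤ w := by nlinarith [sq_nonneg y.re, sq_nonneg y.im]
    rw [Matrix.posSemidef_iff_dotProduct_mulVec]
    constructor
    · ext i j
      fin_cases i <;> fin_cases j <;>
        simp [Matrix.conjTranspose_apply, Complex.ext_iff]
    · intro v
      rw [Complex.le_def]
      simp [dotProduct, Matrix.mulVec, Fin.sum_univ_two, Complex.add_re, Complex.add_im,
        Complex.mul_re, Complex.mul_im]
      constructor
      · set p := (v 0).re; set q := (v 0).im; set s := (v 1).re; set t := (v 1).im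
        by_cases hx0 : 0 < x
        · nlinarith [sq_nonneg (x*p + y.re*s + y.im*t), sq_nonneg (x*q + y.re*t - y.im*s),
            mul_nonneg (sub_nonneg.mpr hn) (sq_nonneg s),
            mul_nonneg (sub_nonneg.mpr hn) (sq_nonneg t)]
        by_cases hw0 : 0 < w
        · nlinarith [sq_nonneg (w*s + y.re*p - y.im*q), sq_nonneg (w*t + y.re*q + y.im*p),
            mul_nonneg (sub_nonneg.mpr hn) (sq_nonneg p),
            mul_nonneg (sub_nonneg.mpr hn) (sq_nonneg q)]
        · have hx' : x = 0 := le_antisymm (not_lt.mp hx0) hx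
          have hw' : w = 0 := le_antisymm (not_lt.mp hw0) hw
          have hr : y.re = 0 := by nlinarith [sq_nonneg y.re, sq_nonneg y.im]
          have hi : y.im = 0 := by nlinarith [sq_nonneg y.re, sq_nonneg y.im]
          simp [hx', hw', hr, hi]
      · ring
end

section
/- Let a, b ∈ C^n with a_i ≠ 0 for all i. Suppose |a_i| = |b_i| for all i (equal diagonals of the outer products) and a_{i+1} · conj(a_i) = b_{i+1} · conj(b_i) for all i = 1, ..., n-1 (equal first sub/super-diagonals of the outer products). Then a a^H = b b^H. (Hence a rank-1 Hermitian matrix with nonzero diagonal is determined by its diagonal and first off-diagonal entries, which underlies the recovery of relative phase information from the band CSDR with half-bandwidth ρ ≥ 1.) -/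
/-- If `a, b ∈ ℂⁿ` have all entries of `a` nonzero, equal entrywise moduli
(`|a_i| = |b_i|`, i.e. equal diagonals of the outer products), and equal first
sub/super-diagonals (`a_{i+1} conj(a_i) = b_{i+1} conj(b_i)`), then `a aᴴ = b bᴴ`.
This underlies the recovery of relative phase from the band CSDR with `ρ ≥ 1`. -/
theorem stmt_8 (n : ℕ) (a b : Fin n → ℂ) (ha : ∀ i, a i ≠ 0)
    (hdiag : ∀ i, ‖a i‖ = ‖b i‖)
    (hoff : ∀ i : ℕ, ∀ h : i + 1 < n,
      a ⟨i + 1, h⟩ * (starRingEnd ℂ) (a ⟨i, Nat.lt_of_succ_lt h⟩) =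
        b ⟨i + 1, h⟩ * (starRingEnd ℂ) (b ⟨i, Nat.lt_of_succ_lt h⟩)) :
    Matrix.vecMulVec a (star a) = Matrix.vecMulVec b (star b) := by
  set c : Fin n → ℂ := fun i => b i / a i with hc
  have hb : ∀ i, b i = c i * a i := by
    intro i; simp [hc, div_mul_cancel₀ _ (ha i)]
  have hcu : ∀ i, (starRingEnd ℂ) (c i) * c i = 1 := by
    intro i
    have h1 : ‖c i‖ = 1 := by
      simp [hc, map_div₀, ← hdiag i, div_self (norm_ne_zero_iff.mpr (ha i))]
    have h2 := Complex.normSq_eq_norm_sq (c i)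
    rw [h1] at h2
    rw [mul_comm, Complex.mul_conj, h2]
    norm_num
  have hadj : ∀ i : ℕ, ∀ h : i + 1 < n, c ⟨i + 1, h⟩ = c ⟨i, Nat.lt_of_succ_lt h⟩ := by
    intro i h
    have h1 := hoff i h
    have hne : a ⟨i + 1, h⟩ * (starRingEnd ℂ) (a ⟨i, Nat.lt_of_succ_lt h⟩) ≠ 0 :=
      mul_ne_zero (ha _) ((map_ne_zero _).mpr (ha _))
    have h2 : c ⟨i + 1, h⟩ * (starRingEnd ℂ) (c ⟨i, Nat.lt_of_succ_lt h⟩) = 1 := by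
      simp only [hc]
      rw [map_div₀, div_mul_div_comm, ← h1, div_self hne]
    calc c ⟨i + 1, h⟩
        = c ⟨i + 1, h⟩ * ((starRingEnd ℂ) (c ⟨i, Nat.lt_of_succ_lt h⟩) *
            c ⟨i, Nat.lt_of_succ_lt h⟩) := by rw [hcu, mul_one]
      _ = (c ⟨i + 1, h⟩ * (starRingEnd ℂ) (c ⟨i, Nat.lt_of_succ_lt h⟩)) *
            c ⟨i, Nat.lt_of_succ_lt h⟩ := by ring
      _ = c ⟨i, Nat.lt_of_succ_lt h⟩ := by rw [h2, one_mul]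
  have hconst : ∀ i j : Fin n, c i = c j := by
    have key : ∀ m : ℕ, ∀ h : m < n, ∀ h0 : 0 < n, c ⟨m, h⟩ = c ⟨0, h0⟩ := by
      intro m
      induction m with
      | zero => intro h h0; rfl
      | succ k ih => intro h h0; rw [hadj k h]; exact ih _ h0
    intro i j
    have h0 : 0 < n := i.pos
    rw [show i = (⟨i.1, i.2⟩ : Fin n) from rfl, show j = (⟨j.1, j.2⟩ : Fin n) from rfl,
      key i.1 i.2 h0, key j.1 j.2 h0]
  ext i j
  simp only [Matrix.vecMulVec_apply, Pi.star_apply, RCLike.star_def]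
  rw [hb i, hb j, map_mul]
  have hcij : c i * (starRingEnd ℂ) (c j) = 1 := by
    rw [hconst i j]
    linear_combination hcu j
  linear_combination (-(a i * (starRingEnd ℂ) (a j))) * hcij
end

section
/- Let G be a tree on a finite vertex set V, and let X be a Hermitian complex matrix indexed by V. Suppose that for every edge {i, j} of G, the 2×2 principal submatrix [[X_{ii}, X_{ij}], [X_{ji}, X_{jj}]] is positive semidefinite, and that X_{ii} ≥ 0 for all i. Then there exists a positive semidefinite Hermitian matrix Y indexed by V such that Y_{ii} = X_{ii} for all i ∈ V and Y_{ij} = X_{ij} whenever {i, j} is an edge of G. (This is the positive semidefinite matrix completion property for tree sparsity patterns: when the network graph is a tree, positive semidefiniteness of all 2×2 clique blocks suffices for the existence of a positive semidefinite completion.) -/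
open ComplexOrder
set_option linter.unusedSectionVars false

namespace TreePSDAux

open Matrix SimpleGraph

variable {V : Type*} [Fintype V] [DecidableEq V] {G : SimpleGraph V}

noncomputable section

variable (hG : G.IsTree) (X : Matrix V V ℂ)

def root : V := hG.isConnected.nonempty.some

def q (v : V) : G.Walk v (root hG) := (hG.existsUnique_path v (root hG)).choose

lemma q_isPath (v : V) : (q hG v).IsPath := (hG.existsUnique_path v (root hG)).choose_spec.1

lemma q_unique {v : V} (p : G.Walk v (root hG)) (hp : p.IsPath) : p = q hG v :=
  (hG.existsUnique_path v (root hG)).choose_spec.2 p hp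

lemma q_root : q hG (root hG) = SimpleGraph.Walk.nil :=
  (q_unique hG SimpleGraph.Walk.nil (SimpleGraph.Walk.IsPath.nil)).symm

lemma q_not_nil {v : V} (hv : v ≠ root hG) : ¬ (q hG v).Nil := by
  intro h
  exact hv (Walk.eq_of_length_eq_zero (Walk.nil_iff_length_eq.mp h))

def par (v : V) : V := (q hG v).getVert 1

lemma adj_par {v : V} (hv : v ≠ root hG) : G.Adj v (par hG v) :=
  (q hG v).adj_snd (q_not_nil hG hv)

lemma q_par {v : V} (hv : v ≠ root hG) : (q hG v).tail = q hG (par hG v) :=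
  q_unique hG _ ((q_isPath hG v).tail)

def dep (v : V) : ℕ := (q hG v).length

lemma dep_root : dep hG (root hG) = 0 := by
  rw [dep, q_root]; rfl

lemma dep_par {v : V} (hv : v ≠ root hG) : dep hG (par hG v) + 1 = dep hG v := by
  rw [dep, ← q_par hG hv, dep]
  exact Walk.length_tail_add_one (q_not_nil hG hv)

lemma not_mem_q_par {v : V} (hv : v ≠ root hG) : v ∉ (q hG (par hG v)).support := by
  rw [← q_par hG hv]; erw [Walk.support_tail_of_not_nil _ (q_not_nil hG hv)]
  have hnd := (q_isPath hG v).support_nodup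
  rw [Walk.support_eq_cons] at hnd
  exact (List.nodup_cons.mp hnd).1

lemma adj_cases {i j : V} (hij : G.Adj i j) :
    (i ≠ root hG ∧ par hG i = j) ∨ (j ≠ root hG ∧ par hG j = i) := by
  by_cases hj : j ∈ (q hG i).support
  · -- the path from i passes through j; then par i = j
    left
    have hipath := q_isPath hG i
    have hd : ((q hG i).dropUntil j hj).IsPath := hipath.dropUntil hj
    have hqj : (q hG i).dropUntil j hj = q hG j := q_unique hG _ hd
    have hi_not : i ∉ ((q hG i).dropUntil j hj).support := by
      intro hmem
      have hspec := (q hG i).take_spec hj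
      have hsupp : (q hG i).support =
          ((q hG i).takeUntil j hj).support ++ ((q hG i).dropUntil j hj).support.tail := by
        conv_lhs => rw [← hspec]
        rw [Walk.support_append]
      have hnd := hipath.support_nodup
      rw [hsupp] at hnd
      have hi1 : i ∈ ((q hG i).takeUntil j hj).support := Walk.start_mem_support _
      have hi2 : i ∈ ((q hG i).dropUntil j hj).support.tail := by
        have := Walk.support_eq_cons ((q hG i).dropUntil j hj)
        rw [this] at hmem
        rcases List.mem_cons.mp hmem with h | h
        · exact absurd h hij.ne
        · exact h
      exact (List.disjoint_of_nodup_append hnd) hi1 hi2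
    have hcons : ((q hG i).dropUntil j hj).cons hij = q hG i :=
      q_unique hG _ (hd.cons hi_not)
    constructor
    · intro hri
      subst hri
      have hnn : ¬ (q hG (root hG)).Nil := by
        rw [← hcons]; exact Walk.not_nil_cons
      rw [q_root hG] at hnn
      exact hnn Walk.Nil.nil
    · rw [par, ← hcons]
      simp [Walk.getVert_cons_succ]
  · right
    have hcons : ((q hG i)).cons hij.symm = q hG j :=
      q_unique hG _ ((q_isPath hG i).cons hj)
    constructor
    · intro hrj
      subst hrj
      have hnn : ¬ (q hG (root hG)).Nil := by
        rw [← hcons]; exact Walk.not_nil_cons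
      rw [q_root hG] at hnn
      exact hnn Walk.Nil.nil
    · rw [par, ← hcons]
      simp [Walk.getVert_cons_succ]


def cc (v : V) : ℂ := X (par hG v) v / X (par hG v) (par hG v)

def tt (v : V) : ℝ :=
  Real.sqrt ((X v v).re - Complex.normSq (cc hG X v) * (X (par hG v) (par hG v)).re)

def bse (v : V) : V → ℂ := (Real.sqrt (X v v).re : ℂ) • (Pi.single v 1 : V → ℂ)

def gv : ℕ → V → (V → ℂ)
  | 0, v => bse X v
  | (n+1), v =>
      if v = root hG then bse X v
      else cc hG X v • gv n (par hG v) + (tt hG X v : ℂ) • (Pi.single v 1 : V → ℂ)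

def vv (v : V) : V → ℂ := gv hG X (dep hG v) v

lemma vv_root : vv hG X (root hG) = bse X (root hG) := by
  rw [vv, dep_root]
  rfl

lemma vv_ne_root {v : V} (hv : v ≠ root hG) :
    vv hG X v = cc hG X v • vv hG X (par hG v) + (tt hG X v : ℂ) • (Pi.single v 1 : V → ℂ) := by
  rw [vv, ← dep_par hG hv, gv, if_neg hv]
  rfl

lemma supp_vv : ∀ n (v : V), dep hG v = n → ∀ k, vv hG X v k ≠ 0 → k ∈ (q hG v).support := by
  intro n
  induction n using Nat.strong_induction_on with
  | _ n ih =>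
    intro v hv k hk
    by_cases hr : v = root hG
    · subst hr
      rw [vv_root] at hk
      simp only [bse, Pi.smul_apply, Pi.single_apply, smul_eq_mul] at hk
      by_cases hkv : k = root hG
      · subst hkv; exact Walk.start_mem_support _
      · simp [hkv] at hk
    · rw [vv_ne_root hG X hr] at hk
      simp only [Pi.add_apply, Pi.smul_apply, smul_eq_mul] at hk
      by_cases h1 : vv hG X (par hG v) k = 0
      · rw [h1, mul_zero, zero_add] at hk
        have hkv : k = v := by
          by_contra hkv
          simp [Pi.single_apply, hkv] at hk
        subst hkv; exact Walk.start_mem_support _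
      · have hmem : k ∈ (q hG (par hG v)).support :=
          ih (dep hG (par hG v)) (by rw [← hv, ← dep_par hG hr]; omega) (par hG v) rfl k h1
        rw [← q_par hG hr] at hmem; erw [Walk.support_tail_of_not_nil _ (q_not_nil hG hr)] at hmem
        exact List.mem_of_mem_tail hmem

lemma vv_par_self {v : V} (hv : v ≠ root hG) : vv hG X (par hG v) v = 0 := by
  by_contra h
  exact not_mem_q_par hG hv (supp_vv hG X (dep hG (par hG v)) (par hG v) rfl v h)


lemma diag_im (hdiag : ∀ i : V, 0 ≤ X i i) (i : V) : (X i i).im = 0 :=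
  ((Complex.le_def.mp (hdiag i)).2).symm

lemma diag_nonneg (hdiag : ∀ i : V, 0 ≤ X i i) (i : V) : 0 ≤ (X i i).re := by
  simpa using (Complex.le_def.mp (hdiag i)).1

lemma diag_eq (hdiag : ∀ i : V, 0 ≤ X i i) (i : V) : X i i = (((X i i).re : ℝ) : ℂ) :=
  Complex.ext rfl (by simp [diag_im X hdiag i])

lemma herm (hX : X.IsHermitian) (i j : V) : X j i = (starRingEnd ℂ) (X i j) :=
  (hX.apply j i).symm

lemma quad_real (a d : ℝ) (b : ℂ)
    (h : ∀ x : Fin 2 → ℂ,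
      0 ≤ dotProduct (star x) ((!![(a:ℂ), b; (starRingEnd ℂ) b, (d:ℂ)]) *ᵥ x)) :
    Complex.normSq b ≤ a * d := by
  have hd0 : 0 ≤ d := by
    have h1 := h ![0, 1]
    rw [Complex.le_def] at h1
    have := h1.1
    simp [Matrix.mulVec, dotProduct, Fin.sum_univ_two] at this
    exact this
  by_cases hd : d = 0
  · subst hd
    rw [mul_zero]
    by_contra hb0
    have hb : b ≠ 0 := by
      intro hb; rw [hb] at hb0; simp at hb0
    have hnb : 0 < Complex.normSq b := Complex.normSq_pos.mpr hb
    set t : ℝ := (a + 1) / (2 * Complex.normSq b) with ht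
    have h1 := h ![1, -(t:ℂ) * (starRingEnd ℂ) b]
    have hE : dotProduct (star ![(1:ℂ), -(t:ℂ) * (starRingEnd ℂ) b])
        ((!![(a:ℂ), b; (starRingEnd ℂ) b, ((0:ℝ):ℂ)]) *ᵥ ![1, -(t:ℂ) * (starRingEnd ℂ) b])
        = ((a - 2 * t * Complex.normSq b : ℝ) : ℂ) := by
      simp [Matrix.mulVec, dotProduct, Fin.sum_univ_two]
      push_cast
      linear_combination (-2 * (t:ℂ)) * Complex.mul_conj b
    rw [hE, Complex.zero_le_real] at h1
    have h2 : 2 * t * Complex.normSq b = a + 1 := by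
      rw [ht]; field_simp
    linarith
  · have hdpos : 0 < d := lt_of_le_of_ne hd0 (Ne.symm hd)
    have h1 := h ![(d:ℂ), -(starRingEnd ℂ) b]
    have hE : dotProduct (star ![(d:ℂ), -(starRingEnd ℂ) b])
        ((!![(a:ℂ), b; (starRingEnd ℂ) b, (d:ℂ)]) *ᵥ ![(d:ℂ), -(starRingEnd ℂ) b])
        = ((d * (a * d - Complex.normSq b) : ℝ) : ℂ) := by
      simp [Matrix.mulVec, dotProduct, Fin.sum_univ_two]
      push_cast
      linear_combination (-(d:ℂ)) * Complex.mul_conj b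
    rw [hE, Complex.zero_le_real] at h1
    nlinarith

lemma cs (hX : X.IsHermitian)
    (hedge : ∀ i j : V, G.Adj i j → Matrix.PosSemidef !![X i i, X i j; X j i, X j j])
    (hdiag : ∀ i : V, 0 ≤ X i i) {i j : V} (hij : G.Adj i j) :
    Complex.normSq (X i j) ≤ (X i i).re * (X j j).re := by
  apply quad_real
  intro x
  have h := (hedge i j hij).dotProduct_mulVec_nonneg x
  have hM : !![X i i, X i j; X j i, X j j]
      = !![(((X i i).re : ℝ) : ℂ), X i j; (starRingEnd ℂ) (X i j), (((X j j).re : ℝ) : ℂ)] := by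
    rw [← diag_eq X hdiag i, ← diag_eq X hdiag j, ← herm X hX i j]
  rw [hM] at h
  exact h


lemma diag_re_pos (hdiag : ∀ i : V, 0 ≤ X i i) {i : V} (h : X i i ≠ 0) : 0 < (X i i).re := by
  rcases lt_or_eq_of_le (diag_nonneg X hdiag i) with h1 | h1
  · exact h1
  · exact absurd (Complex.ext (by simp [← h1]) (by simp [diag_im X hdiag i]) :
      X i i = 0) h

lemma key (hX : X.IsHermitian)
    (hedge : ∀ i j : V, G.Adj i j → Matrix.PosSemidef !![X i i, X i j; X j i, X j j])
    (hdiag : ∀ i : V, 0 ≤ X i i) {v : V} (hv : v ≠ root hG) :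
    0 ≤ (X v v).re - Complex.normSq (cc hG X v) * (X (par hG v) (par hG v)).re := by
  by_cases hpp : X (par hG v) (par hG v) = 0
  · simp [cc, hpp, diag_nonneg X hdiag v]
  · have hadj := adj_par hG hv
    have hcs := cs X hX hedge hdiag hadj
    have hppre : 0 < (X (par hG v) (par hG v)).re := diag_re_pos X hdiag hpp
    have hnc : Complex.normSq (cc hG X v)
        = Complex.normSq (X v (par hG v)) /
          ((X (par hG v) (par hG v)).re * (X (par hG v) (par hG v)).re) := by
      rw [cc, Complex.normSq_div, herm X hX v (par hG v), Complex.normSq_conj]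
      congr 1
      rw [diag_eq X hdiag (par hG v), Complex.normSq_ofReal]
      simp
    rw [hnc]
    rw [div_mul_eq_mul_div, sub_nonneg, div_le_iff₀ (by positivity)]
    nlinarith

lemma cmul (hX : X.IsHermitian)
    (hedge : ∀ i j : V, G.Adj i j → Matrix.PosSemidef !![X i i, X i j; X j i, X j j])
    (hdiag : ∀ i : V, 0 ≤ X i i) {v : V} (hv : v ≠ root hG) :
    cc hG X v * X (par hG v) (par hG v) = X (par hG v) v := by
  by_cases hpp : X (par hG v) (par hG v) = 0
  · have hcs := cs X hX hedge hdiag (adj_par hG hv)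
    have h0 : (X (par hG v) (par hG v)).re = 0 := by rw [hpp]; rfl
    rw [h0, mul_zero] at hcs
    have hb : X v (par hG v) = 0 := by
      have := Complex.normSq_nonneg (X v (par hG v))
      have h2 : Complex.normSq (X v (par hG v)) = 0 := le_antisymm hcs this
      exact Complex.normSq_eq_zero.mp h2
    rw [hpp, mul_zero, herm X hX v (par hG v), hb]
    simp
  · rw [cc]
    exact div_mul_cancel₀ _ hpp

lemma dot_root (hdiag : ∀ i : V, 0 ≤ X i i) :
    dotProduct (star (bse X (root hG))) (bse X (root hG)) = X (root hG) (root hG) := by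
  rw [diag_eq X hdiag (root hG)]
  simp only [bse, dotProduct, Pi.star_apply, Pi.smul_apply, Pi.single_apply,
    smul_eq_mul]
  rw [Finset.sum_eq_single (root hG)]
  · simp [← Complex.ofReal_mul, Real.mul_self_sqrt (diag_nonneg X hdiag (root hG))]
  · intro k _ hk
    simp [hk]
  · simp

lemma norm_vv (hX : X.IsHermitian)
    (hedge : ∀ i j : V, G.Adj i j → Matrix.PosSemidef !![X i i, X i j; X j i, X j j])
    (hdiag : ∀ i : V, 0 ≤ X i i) :
    ∀ n (v : V), dep hG v = n →
      dotProduct (star (vv hG X v)) (vv hG X v) = X v v := by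
  intro n
  induction n using Nat.strong_induction_on with
  | _ n ih =>
    intro v hv
    by_cases hr : v = root hG
    · subst hr
      rw [vv_root]
      exact dot_root hG X hdiag
    · have hA := ih (dep hG (par hG v)) (by rw [← hv, ← dep_par hG hr]; omega) (par hG v) rfl
      rw [vv_ne_root hG X hr]
      have hAv : vv hG X (par hG v) v = 0 := vv_par_self hG X hr
      simp only [star_add, star_smul, add_dotProduct, dotProduct_add,
        smul_dotProduct, dotProduct_smul, smul_eq_mul]
      rw [hA]
      have he1 : dotProduct (star (vv hG X (par hG v))) (Pi.single v 1 : V → ℂ) = 0 := by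
        rw [dotProduct_single, Pi.star_apply, hAv]
        simp
      have hsingle : star (Pi.single v 1 : V → ℂ) = (Pi.single v 1 : V → ℂ) := by
        rw [← Pi.single_star, star_one]
      have he2 : dotProduct (star (Pi.single v 1 : V → ℂ)) (vv hG X (par hG v)) = 0 := by
        rw [hsingle, single_dotProduct, hAv]
        simp
      have he3 : dotProduct (star (Pi.single v 1 : V → ℂ)) (Pi.single v 1 : V → ℂ) = 1 := by
        rw [hsingle, single_dotProduct]
        simp
      rw [he1, he2, he3]
      have hstt : star ((tt hG X v : ℝ) : ℂ) = ((tt hG X v : ℝ) : ℂ) := by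
        rw [Complex.star_def, Complex.conj_ofReal]
      rw [hstt]
      have hccc : star (cc hG X v) * cc hG X v = (Complex.normSq (cc hG X v) : ℂ) := by
        rw [Complex.star_def, ← Complex.normSq_eq_conj_mul_self]
      have htt : ((tt hG X v : ℝ) : ℂ) * ((tt hG X v : ℝ) : ℂ)
          = (((X v v).re - Complex.normSq (cc hG X v) * (X (par hG v) (par hG v)).re : ℝ) : ℂ) := by
        rw [← Complex.ofReal_mul]
        congr 1
        rw [tt]
        exact Real.mul_self_sqrt (key hG X hX hedge hdiag hr)
      have final : (Complex.normSq (cc hG X v) : ℂ) * X (par hG v) (par hG v)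
          + ((tt hG X v : ℝ) : ℂ) * ((tt hG X v : ℝ) : ℂ) = X v v := by
        rw [htt]
        apply Complex.ext <;>
          simp [Complex.add_re, Complex.mul_re, Complex.add_im, Complex.mul_im,
            diag_im X hdiag] <;> ring
      simp only [add_zero, zero_add, mul_one, mul_zero]
      linear_combination final + X (par hG v) (par hG v) * hccc

lemma inner_par (hX : X.IsHermitian)
    (hedge : ∀ i j : V, G.Adj i j → Matrix.PosSemidef !![X i i, X i j; X j i, X j j])
    (hdiag : ∀ i : V, 0 ≤ X i i) {v : V} (hv : v ≠ root hG) :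
    dotProduct (star (vv hG X (par hG v))) (vv hG X v) = X (par hG v) v := by
  rw [vv_ne_root hG X hv, dotProduct_add, dotProduct_smul, dotProduct_smul,
    norm_vv hG X hX hedge hdiag (dep hG (par hG v)) (par hG v) rfl,
    dotProduct_single, Pi.star_apply, vv_par_self hG X hv]
  simp only [star_zero, zero_mul, mul_zero, add_zero, smul_eq_mul, mul_one]
  exact cmul hG X hX hedge hdiag hv


lemma dot_conj (a b : V → ℂ) :
    dotProduct (star a) b = (starRingEnd ℂ) (dotProduct (star b) a) := by
  simp only [dotProduct, Pi.star_apply, map_sum, _root_.map_mul, Complex.star_def,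
    Complex.conj_conj]
  exact Finset.sum_congr rfl fun k _ => mul_comm _ _

end
end TreePSDAux

open Matrix in
/-- PSD completion for tree sparsity patterns: if `G` is a tree, `X` is Hermitian,
every `2×2` principal submatrix corresponding to an edge of `G` is PSD, and the
diagonal of `X` is nonnegative, then there is a PSD matrix `Y` agreeing with `X`
on the diagonal and on all edges of `G`. -/
theorem stmt_12 (V : Type*) [Fintype V] [DecidableEq V] (G : SimpleGraph V)
    (hG : G.IsTree) (X : Matrix V V ℂ) (hX : X.IsHermitian)
    (hedge : ∀ i j : V, G.Adj i j →
      (Matrix.PosSemidef !![X i i, X i j; X j i, X j j]))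
    (hdiag : ∀ i : V, 0 ≤ X i i) :
    ∃ Y : Matrix V V ℂ, Y.PosSemidef ∧ (∀ i : V, Y i i = X i i) ∧
      ∀ i j : V, G.Adj i j → Y i j = X i j := by
  classical
  set B : Matrix V V ℂ := Matrix.of (fun k i => TreePSDAux.vv hG X i k) with hB
  have hentry : ∀ i j : V, (Bᴴ * B) i j
      = dotProduct (star (TreePSDAux.vv hG X i)) (TreePSDAux.vv hG X j) := by
    intro i j
    simp [hB, Matrix.mul_apply, Matrix.conjTranspose_apply, dotProduct,
      Matrix.of_apply, Pi.star_apply]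
  refine ⟨Bᴴ * B, Matrix.posSemidef_conjTranspose_mul_self B, ?_, ?_⟩
  · intro i
    rw [hentry]
    exact TreePSDAux.norm_vv hG X hX hedge hdiag (TreePSDAux.dep hG i) i rfl
  · intro i j hij
    rw [hentry]
    rcases TreePSDAux.adj_cases hG hij with ⟨hi, hpi⟩ | ⟨hj, hpj⟩
    · subst hpi
      rw [TreePSDAux.dot_conj, TreePSDAux.inner_par hG X hX hedge hdiag hi]
      exact (TreePSDAux.herm X hX (TreePSDAux.par hG i) i).symm
    · subst hpj
      exact TreePSDAux.inner_par hG X hX hedge hdiag hj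
end

section
/- There is no 4×4 positive semidefinite Hermitian complex matrix Y with Y_{11} = Y_{22} = Y_{33} = Y_{44} = 1, Y_{12} = Y_{23} = Y_{34} = 1, and Y_{14} = -1, even though every specified 2×2 principal submatrix (corresponding to the edges {1,2}, {2,3}, {3,4}, {1,4} of the 4-cycle) is positive semidefinite. (Hence positive semidefiniteness of all dense principal submatrices of a partial matrix is necessary but not sufficient for the existence of a positive semidefinite completion when the sparsity pattern is not chordal.) -/
open ComplexOrder

/-- The 4-cycle partial matrix with unit diagonal, `X_{12} = X_{23} = X_{34} = 1`
and `X_{14} = -1` has all its specified `2×2` principal submatrices PSD, yet it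
admits no positive semidefinite completion.  Hence PSD-ness of all dense principal
submatrices is not sufficient for completability on nonchordal patterns. -/
theorem stmt_13 :
    (Matrix.PosSemidef !![(1 : ℂ), 1; 1, 1]) ∧
    (Matrix.PosSemidef !![(1 : ℂ), -1; -1, 1]) ∧
    ¬ ∃ Y : Matrix (Fin 4) (Fin 4) ℂ, Y.PosSemidef ∧
        Y 0 0 = 1 ∧ Y 1 1 = 1 ∧ Y 2 2 = 1 ∧ Y 3 3 = 1 ∧
        Y 0 1 = 1 ∧ Y 1 2 = 1 ∧ Y 2 3 = 1 ∧ Y 0 3 = -1 := by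
  refine ⟨?_, ?_, ?_⟩
  · refine Matrix.PosSemidef.of_dotProduct_mulVec_nonneg ?_ ?_
    · ext i j; fin_cases i <;> fin_cases j <;> simp [Matrix.conjTranspose_apply]
    · intro x
      have : dotProduct (star x) (!![(1 : ℂ), 1; 1, 1].mulVec x)
          = star (x 0 + x 1) * (x 0 + x 1) := by
        simp [dotProduct, Matrix.mulVec, Fin.sum_univ_two]
        ring
      rw [this]
      exact star_mul_self_nonneg _
  · refine Matrix.PosSemidef.of_dotProduct_mulVec_nonneg ?_ ?_
    · ext i j; fin_cases i <;> fin_cases j <;> simp [Matrix.conjTranspose_apply]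
    · intro x
      have : dotProduct (star x) (!![(1 : ℂ), -1; -1, 1].mulVec x)
          = star (x 0 - x 1) * (x 0 - x 1) := by
        simp [dotProduct, Matrix.mulVec, Fin.sum_univ_two]
        ring
      rw [this]
      exact star_mul_self_nonneg _
  · rintro ⟨Y, hY, h00, h11, h22, h33, h01, h12, h23, h03⟩
    have h10 : Y 1 0 = 1 := by
      have := hY.1.apply 1 0; rw [h01] at this; simpa using this.symm
    have h21 : Y 2 1 = 1 := by
      have := hY.1.apply 2 1; rw [h12] at this; simpa using this.symm
    have h32 : Y 3 2 = 1 := by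
      have := hY.1.apply 3 2; rw [h23] at this; simpa using this.symm
    have h30 : Y 3 0 = -1 := by
      have := hY.1.apply 3 0; rw [h03] at this; simpa using this.symm
    have ker : ∀ x : Fin 4 → ℂ, dotProduct (star x) (Y.mulVec x) = 0 → Y.mulVec x = 0 :=
      fun x => (hY.dotProduct_mulVec_zero_iff x).mp
    have k1 : Y.mulVec ![1, -1, 0, 0] = 0 := by
      apply ker
      simp [dotProduct, Matrix.mulVec, Fin.sum_univ_four, h00, h11, h01, h10]
    have k2 : Y.mulVec ![0, 1, -1, 0] = 0 := by
      apply ker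
      simp [dotProduct, Matrix.mulVec, Fin.sum_univ_four, h11, h22, h12, h21]
    have k3 : Y.mulVec ![0, 0, 1, -1] = 0 := by
      apply ker
      simp [dotProduct, Matrix.mulVec, Fin.sum_univ_four, h22, h33, h23, h32]
    have k4 : Y.mulVec ![1, 0, 0, 1] = 0 := by
      apply ker
      simp [dotProduct, Matrix.mulVec, Fin.sum_univ_four, h00, h33, h03, h30]
    have hsum : Y.mulVec ![2, 0, 0, 0] = 0 := by
      have : (![2, 0, 0, 0] : Fin 4 → ℂ)
          = ![1, -1, 0, 0] + ![0, 1, -1, 0] + ![0, 0, 1, -1] + ![1, 0, 0, 1] := by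
        funext i; fin_cases i <;> simp <;> norm_num
      rw [this, Matrix.mulVec_add, Matrix.mulVec_add, Matrix.mulVec_add, k1, k2, k3, k4]
      simp
    have : (Y.mulVec ![2, 0, 0, 0]) 0 = 2 := by
      simp [Matrix.mulVec, dotProduct, Fin.sum_univ_four, h00]
    rw [hsum] at this
    simp at this
end
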